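/- Let S be a hyponormal unilateral weighted shift on H with nonzero weight sequence (α_n)_{n≥1} and M = lim_{n→∞} |α_n|. Then the approximate point spectrum of S is exactly the circle {λ ∈ ℂ : |λ| = M}. -/

import Mathlib

open scoped InnerProductSpace ComplexConjugate

set_option linter.unusedSectionVars false
set_option maxHeartbeats 1000000

section WShiftAux

variable {H : Type*} [NormedAddCommGroup H] [InnerProductSpace ℂ H] [CompleteSpace H]

private lemma wshift_parseval (e : HilbertBasis ℕ ℂ H) (x : H) :
    HasSum (fun n : ℕ => ‖(e.repr x) n‖ ^ 2) (‖x‖ ^ 2) := by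
  have h := (e.hasSum_inner_mul_inner x x).mapL Complex.reCLM
  have hre : Complex.reCLM ⟪x, x⟫_ℂ = ‖x‖ ^ 2 := by
    simpa using inner_self_eq_norm_sq (𝕜 := ℂ) x
  rw [hre] at h
  convert h using 2 with n
  rw [← inner_conj_symm x (e n), ← e.repr_apply_apply]
  have : (starRingEnd ℂ) (e.repr x n) * e.repr x n = ((‖e.repr x n‖ : ℂ)) ^ 2 :=
    RCLike.conj_mul _
  simp [this, ← Complex.ofReal_pow]

private lemma wshift_repr (e : HilbertBasis ℕ ℂ H) (α : ℕ → ℂ) (S : H →L[ℂ] H)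
    (hS : ∀ n : ℕ, S (e n) = α n • e (n + 1)) (x : H) :
    e.repr (S x) 0 = 0 ∧ ∀ n : ℕ, e.repr (S x) (n + 1) = α n * e.repr x n := by
  have hsum : HasSum (fun i : ℕ => (e.repr x i * α i) • e (i + 1)) (S x) := by
    have h := (e.hasSum_repr x).mapL S
    convert h using 2 with i
    rw [map_smul, hS, smul_smul]
  have key : ∀ m : ℕ,
      HasSum (fun i : ℕ => if m = i + 1 then e.repr x i * α i else 0) (e.repr (S x) m) := by
    intro m
    have h2 := hsum.mapL (innerSL ℂ (e m))
    have h3 : ((innerSL ℂ) (e m)) (S x) = e.repr (S x) m := by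
      rw [e.repr_apply_apply]; rfl
    rw [h3] at h2
    convert h2 using 2 with i
    case e'_3 => rfl
    rw [innerSL_apply_apply, inner_smul_right, orthonormal_iff_ite.mp e.orthonormal m (i + 1)]
    simp [mul_comm]
  constructor
  · have h0 := key 0
    have hz : (fun i : ℕ => if 0 = i + 1 then e.repr x i * α i else 0) = fun _ : ℕ => (0 : ℂ) := by
      funext i; rw [if_neg (by omega)]
    rw [hz] at h0
    simpa using h0.unique hasSum_zero
  · intro n
    have hn := key (n + 1)
    have hz : (fun i : ℕ => if n + 1 = i + 1 then e.repr x i * α i else 0)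
        = fun i : ℕ => if i = n then e.repr x n * α n else 0 := by
      funext i
      rcases eq_or_ne i n with h | h
      · simp [h]
      · rw [if_neg (by omega), if_neg h]
    rw [hz] at hn
    rw [hn.unique (hasSum_ite_eq n _), mul_comm]

private lemma wshift_pow_hasSum (e : HilbertBasis ℕ ℂ H) (α : ℕ → ℂ) (S : H →L[ℂ] H)
    (hS : ∀ n : ℕ, S (e n) = α n • e (n + 1)) :
    ∀ (k : ℕ) (x : H),
      HasSum (fun n : ℕ => (∏ i ∈ Finset.range k, ‖α (n + i)‖ ^ 2) * ‖(e.repr x) n‖ ^ 2)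
        (‖(S ^ k) x‖ ^ 2) := by
  intro k
  induction k with
  | zero => intro x; simpa using wshift_parseval e x
  | succ k ih =>
    intro x
    have h1 := ih (S x)
    obtain ⟨h0, hs⟩ := wshift_repr e α S hS x
    set f : ℕ → ℝ := fun m => (∏ i ∈ Finset.range k, ‖α (m + i)‖ ^ 2) * ‖(e.repr (S x)) m‖ ^ 2
      with hf
    have hf0 : ∀ m ∉ Set.range Nat.succ, f m = 0 := by
      intro m hm
      have : m = 0 := by
        by_contra hm0
        exact hm ⟨m - 1, by omega⟩
      simp [hf, this, h0]
    have h2 : HasSum (f ∘ Nat.succ) (‖(S ^ k) (S x)‖ ^ 2) :=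
      (Function.Injective.hasSum_iff Nat.succ_injective hf0).mpr h1
    have h3 : (S ^ (k + 1)) x = (S ^ k) (S x) := by
      rw [pow_succ, ContinuousLinearMap.mul_apply]
    rw [h3]
    convert h2 using 2 with n
    simp only [Function.comp, hf, Nat.succ_eq_add_one, hs n, norm_mul, mul_pow]
    rw [Finset.prod_range_succ']
    have hpp : (∏ i ∈ Finset.range k, ‖α (n + (i + 1))‖ ^ 2)
        = ∏ i ∈ Finset.range k, ‖α (n + 1 + i)‖ ^ 2 :=
      Finset.prod_congr rfl fun i _ => by rw [show n + (i + 1) = n + 1 + i by omega]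
    rw [hpp, mul_assoc]; norm_num

private lemma wshift_pow_le (e : HilbertBasis ℕ ℂ H) (α : ℕ → ℂ) (S : H →L[ℂ] H)
    (hS : ∀ n : ℕ, S (e n) = α n • e (n + 1)) (M : ℝ) (hle : ∀ n, ‖α n‖ ≤ M)
    (k : ℕ) (x : H) : ‖(S ^ k) x‖ ≤ M ^ k * ‖x‖ := by
  have hM0 : (0 : ℝ) ≤ M := le_trans (norm_nonneg _) (hle 0)
  have hsq : ‖(S ^ k) x‖ ^ 2 ≤ (M ^ k * ‖x‖) ^ 2 := by
    have hr : HasSum (fun n : ℕ => (M ^ k) ^ 2 * ‖(e.repr x) n‖ ^ 2) ((M ^ k) ^ 2 * ‖x‖ ^ 2) :=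
      (wshift_parseval e x).mul_left _
    have h := hasSum_le (f := fun n : ℕ =>
        (∏ i ∈ Finset.range k, ‖α (n + i)‖ ^ 2) * ‖(e.repr x) n‖ ^ 2)
      (fun n => ?_) (wshift_pow_hasSum e α S hS k x) hr
    · calc ‖(S ^ k) x‖ ^ 2 ≤ (M ^ k) ^ 2 * ‖x‖ ^ 2 := h
        _ = (M ^ k * ‖x‖) ^ 2 := by ring
    · refine mul_le_mul_of_nonneg_right ?_ (sq_nonneg _)
      calc ∏ i ∈ Finset.range k, ‖α (n + i)‖ ^ 2
          ≤ ∏ _i ∈ Finset.range k, M ^ 2 :=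
            Finset.prod_le_prod (fun i _ => sq_nonneg _)
              (fun i _ => pow_le_pow_left₀ (norm_nonneg _) (hle _) 2)
        _ = (M ^ k) ^ 2 := by rw [Finset.prod_const, Finset.card_range]; ring
  exact le_of_pow_le_pow_left₀ two_ne_zero (by positivity) hsq

private lemma wshift_pow_lb (e : HilbertBasis ℕ ℂ H) (α : ℕ → ℂ) (S : H →L[ℂ] H)
    (hS : ∀ n : ℕ, S (e n) = α n • e (n + 1)) (hmono : ∀ n : ℕ, ‖α n‖ ≤ ‖α (n + 1)‖)
    (N k : ℕ) (hkN : N ≤ k) (x : H) :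
    (‖α 0‖ ^ N * ‖α N‖ ^ (k - N)) * ‖x‖ ≤ ‖(S ^ k) x‖ := by
  have mono : Monotone fun n => ‖α n‖ := monotone_nat_of_le_succ hmono
  set m := k - N with hm
  have hk : k = N + m := by omega
  set C : ℝ := ‖α 0‖ ^ N * ‖α N‖ ^ m with hC
  have hC0 : 0 ≤ C := by positivity
  have key : ∀ n : ℕ, C ^ 2 ≤ ∏ i ∈ Finset.range k, ‖α (n + i)‖ ^ 2 := by
    intro n
    have step1 : ∏ i ∈ Finset.range k, ‖α i‖ ^ 2 ≤ ∏ i ∈ Finset.range k, ‖α (n + i)‖ ^ 2 :=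
      Finset.prod_le_prod (fun i _ => sq_nonneg _)
        (fun i _ => pow_le_pow_left₀ (norm_nonneg _) (mono (Nat.le_add_left i n)) 2)
    have step2 : C ^ 2 ≤ ∏ i ∈ Finset.range k, ‖α i‖ ^ 2 := by
      rw [hk, Finset.prod_range_add]
      have h1 : (‖α 0‖ ^ 2) ^ N ≤ ∏ i ∈ Finset.range N, ‖α i‖ ^ 2 := by
        calc (‖α 0‖ ^ 2) ^ N = ∏ _i ∈ Finset.range N, ‖α 0‖ ^ 2 := by
              rw [Finset.prod_const, Finset.card_range]
          _ ≤ ∏ i ∈ Finset.range N, ‖α i‖ ^ 2 :=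
              Finset.prod_le_prod (fun _ _ => sq_nonneg _)
                (fun i _ => pow_le_pow_left₀ (norm_nonneg _) (mono (Nat.zero_le i)) 2)
      have h2 : (‖α N‖ ^ 2) ^ m ≤ ∏ i ∈ Finset.range m, ‖α (N + i)‖ ^ 2 := by
        calc (‖α N‖ ^ 2) ^ m = ∏ _i ∈ Finset.range m, ‖α N‖ ^ 2 := by
              rw [Finset.prod_const, Finset.card_range]
          _ ≤ ∏ i ∈ Finset.range m, ‖α (N + i)‖ ^ 2 :=
              Finset.prod_le_prod (fun _ _ => sq_nonneg _)
                (fun i _ => pow_le_pow_left₀ (norm_nonneg _) (mono (Nat.le_add_right N i)) 2)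
      calc C ^ 2 = (‖α 0‖ ^ 2) ^ N * (‖α N‖ ^ 2) ^ m := by rw [hC]; ring
        _ ≤ (∏ i ∈ Finset.range N, ‖α i‖ ^ 2) * ∏ i ∈ Finset.range m, ‖α (N + i)‖ ^ 2 :=
            mul_le_mul h1 h2 (by positivity) (Finset.prod_nonneg fun _ _ => sq_nonneg _)
    exact le_trans step2 step1
  have hsq : (C * ‖x‖) ^ 2 ≤ ‖(S ^ k) x‖ ^ 2 := by
    have hl : HasSum (fun n : ℕ => C ^ 2 * ‖(e.repr x) n‖ ^ 2) (C ^ 2 * ‖x‖ ^ 2) :=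
      (wshift_parseval e x).mul_left _
    have h := hasSum_le (fun n => mul_le_mul_of_nonneg_right (key n) (sq_nonneg _))
      hl (wshift_pow_hasSum e α S hS k x)
    calc (C * ‖x‖) ^ 2 = C ^ 2 * ‖x‖ ^ 2 := by ring
      _ ≤ ‖(S ^ k) x‖ ^ 2 := h
  exact le_of_pow_le_pow_left₀ two_ne_zero (norm_nonneg _) hsq

end WShiftAux

/-- The approximate point spectrum of a hyponormal unilateral weighted shift with
nonzero weights is exactly the circle of radius `M = lim ‖α n‖`. -/
theorem approxPointSpectrum_of_hyponormal_unilateral_weighted_shift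
    {H : Type*} [NormedAddCommGroup H] [InnerProductSpace ℂ H] [CompleteSpace H]
    (e : HilbertBasis ℕ ℂ H) (α : ℕ → ℂ) (S : H →L[ℂ] H)
    (hS : ∀ n : ℕ, S (e n) = α n • e (n + 1))
    (hmono : ∀ n : ℕ, ‖α n‖ ≤ ‖α (n + 1)‖)
    (hnz : ∀ n : ℕ, α n ≠ 0)
    (M : ℝ) (hM : Filter.Tendsto (fun n : ℕ => ‖α n‖) Filter.atTop (nhds M)) :
    {lam : ℂ | ¬ ∃ c : ℝ, 0 < c ∧ ∀ x : H,
        c * ‖x‖ ≤ ‖(lam • (1 : H →L[ℂ] H) - S) x‖}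
      = {lam : ℂ | ‖lam‖ = M} := by
  have mono : Monotone fun n => ‖α n‖ := monotone_nat_of_le_succ hmono
  have hle : ∀ n, ‖α n‖ ≤ M := fun n => mono.ge_of_tendsto hM n
  have hpos : ∀ n, (0:ℝ) < ‖α n‖ := fun n => norm_pos_iff.mpr (hnz n)
  have hM0 : 0 < M := lt_of_lt_of_le (hpos 0) (hle 0)
  ext lam
  simp only [Set.mem_setOf_eq]
  constructor
  · -- no lower bound → on the circle
    intro hno
    by_contra hne
    apply hno
    rcases lt_or_gt_of_ne hne with hlt | hgt
    · -- ‖lam‖ < M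
      obtain ⟨N, hN⟩ := (hM.eventually (lt_mem_nhds hlt)).exists
      set r := ‖α N‖ with hr
      have hr0 : 0 < r := hpos N
      set q := ‖lam‖ / r with hq
      have hq0 : 0 ≤ q := by positivity
      have hq1 : q < 1 := (div_lt_one hr0).mpr hN
      set ε := ‖α 0‖ ^ N / r ^ N with hε
      have hε0 : 0 < ε := by rw [hε]; exact div_pos (pow_pos (hpos 0) N) (pow_pos hr0 N)
      obtain ⟨k, hk1, hk2⟩ := (((tendsto_pow_atTop_nhds_zero_of_lt_one hq0 hq1).eventually
        (gt_mem_nhds hε0)).and (Filter.eventually_ge_atTop (N + 1))).exists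
      have hkN : N ≤ k := by omega
      obtain ⟨m, hm⟩ : ∃ m, k = N + m := ⟨k - N, by omega⟩
      have hmk : k - N = m := by omega
      set C := ‖α 0‖ ^ N * r ^ m with hCdef
      have hC0 : 0 < C := by rw [hCdef]; exact mul_pos (pow_pos (hpos 0) N) (pow_pos hr0 m)
      have hD : ‖lam‖ ^ k < C := by
        have h1 : ‖lam‖ ^ k = q ^ k * r ^ k := by
          rw [hq, div_pow, div_mul_cancel₀ _ (by positivity : (r:ℝ) ^ k ≠ 0)]
        have h2 : ε * r ^ k = C := by
          rw [hε, hCdef, hm, pow_add]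
          field_simp
        calc ‖lam‖ ^ k = q ^ k * r ^ k := h1
          _ < ε * r ^ k := mul_lt_mul_of_pos_right hk1 (by positivity)
          _ = C := h2
      have hk0 : (0:ℝ) < (k:ℝ) := by exact_mod_cast (by omega : 0 < k)
      have hden : (0:ℝ) < (k:ℝ) * M ^ (k-1) := mul_pos hk0 (pow_pos hM0 _)
      refine ⟨(C - ‖lam‖ ^ k) / ((k:ℝ) * M ^ (k-1)), div_pos (by linarith) hden, fun x => ?_⟩
      set T := lam • (1 : H →L[ℂ] H) with hT
      have hcomm : Commute T S := (Commute.one_left S).smul_left lam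
      set y := (T - S) x with hy
      have hTi : ∀ (i : ℕ) (z : H), (T ^ i) z = lam ^ i • z := by
        intro i z
        rw [hT, smul_pow, one_pow]
        simp
      have hid : (T ^ k) x - (S ^ k) x
          = (∑ i ∈ Finset.range k, T ^ i * S ^ (k - 1 - i)) y := by
        rw [hy, ← ContinuousLinearMap.mul_apply, hcomm.geom_sum₂_mul k,
          ContinuousLinearMap.sub_apply]
      have hns : ‖(∑ i ∈ Finset.range k, T ^ i * S ^ (k - 1 - i)) y‖
          ≤ ((k:ℝ) * M ^ (k-1)) * ‖y‖ := by
        rw [ContinuousLinearMap.sum_apply]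
        refine le_trans (norm_sum_le _ _) ?_
        have hterm : ∀ i ∈ Finset.range k,
            ‖(T ^ i * S ^ (k - 1 - i)) y‖ ≤ M ^ (k-1) * ‖y‖ := by
          intro i hi
          rw [ContinuousLinearMap.mul_apply, hTi, norm_smul, norm_pow]
          have h1 : ‖(S ^ (k-1-i)) y‖ ≤ M ^ (k-1-i) * ‖y‖ := wshift_pow_le e α S hS M hle _ _
          have h3 : ‖lam‖ ^ i ≤ M ^ i := pow_le_pow_left₀ (norm_nonneg _) (le_of_lt hlt) i
          calc ‖lam‖ ^ i * ‖(S ^ (k-1-i)) y‖ ≤ M ^ i * (M ^ (k-1-i) * ‖y‖) :=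
                mul_le_mul h3 h1 (norm_nonneg _) (by positivity)
            _ = M ^ (i + (k-1-i)) * ‖y‖ := by rw [pow_add]; ring
            _ = M ^ (k-1) * ‖y‖ := by
                rw [show i + (k-1-i) = k-1 from by
                  have := Finset.mem_range.mp hi; omega]
        calc ∑ i ∈ Finset.range k, ‖(T ^ i * S ^ (k - 1 - i)) y‖
            ≤ ∑ _i ∈ Finset.range k, M ^ (k-1) * ‖y‖ := Finset.sum_le_sum hterm
          _ = (k:ℝ) * (M ^ (k-1) * ‖y‖) := by
              rw [Finset.sum_const, Finset.card_range, nsmul_eq_mul]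
          _ = ((k:ℝ) * M ^ (k-1)) * ‖y‖ := by ring
      have hlb : C * ‖x‖ ≤ ‖(S ^ k) x‖ := by
        have := wshift_pow_lb e α S hS hmono N k hkN x
        rwa [hmk, ← hr, ← hCdef] at this
      have h5 : ‖(T ^ k) x‖ = ‖lam‖ ^ k * ‖x‖ := by rw [hTi, norm_smul, norm_pow]
      have h4 : ‖(S ^ k) x‖ ≤ ‖(T ^ k) x - (S ^ k) x‖ + ‖(T ^ k) x‖ := by
        calc ‖(S ^ k) x‖ = ‖((T ^ k) x - (S ^ k) x) - (T ^ k) x‖ := by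
              rw [sub_sub_cancel_left, norm_neg]
          _ ≤ _ := norm_sub_le _ _
      have hchain : C * ‖x‖ ≤ ‖lam‖ ^ k * ‖x‖ + ((k:ℝ) * M ^ (k-1)) * ‖y‖ := by
        rw [hid] at h4
        have := le_trans hlb h4
        linarith [hns]
      rw [div_mul_eq_mul_div, div_le_iff₀ hden]
      have hyx : ‖(lam • (1 : H →L[ℂ] H) - S) x‖ = ‖y‖ := by rw [hy, hT]
      rw [hyx]
      nlinarith [norm_nonneg x, norm_nonneg y]
    · -- M < ‖lam‖
      refine ⟨‖lam‖ - M, by linarith, fun x => ?_⟩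
      have h1 : (lam • (1 : H →L[ℂ] H) - S) x = lam • x - S x := by
        simp [ContinuousLinearMap.sub_apply]
      rw [h1]
      have h2 : ‖S x‖ ≤ M * ‖x‖ := by
        have := wshift_pow_le e α S hS M hle 1 x
        simpa using this
      have h3 : ‖lam • x‖ - ‖S x‖ ≤ ‖lam • x - S x‖ := norm_sub_norm_le _ _
      rw [norm_smul] at h3
      linarith
  · -- circle → no lower bound
    rintro hlam ⟨c, hc, hbd⟩
    have hlam0 : lam ≠ 0 := by
      intro h
      rw [h, norm_zero] at hlam
      linarith
    set δ := min (1/2 : ℝ) (c^2 / (9 * M^2)) with hδdef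
    have hδ0 : 0 < δ := lt_min (by norm_num) (by positivity)
    have hδhalf : δ ≤ 1/2 := min_le_left _ _
    have hδc : δ ≤ c^2 / (9*M^2) := min_le_right _ _
    set q := (1 - δ)^2 with hqdef
    have h1δ : 0 ≤ 1 - δ := by linarith
    have hq0 : 0 ≤ q := sq_nonneg _
    have hq1 : q < 1 := by nlinarith
    have hqlt : (0:ℝ) < 1 - q := by linarith
    have h1q2δ : 1 - q ≤ 2*δ := by nlinarith
    have h9 : δ * (9 * M^2) ≤ c^2 := (le_div_iff₀ (by positivity)).mp hδc
    have hB : (2*M/c)^2 < (1-q)⁻¹ := by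
      have key : (2*M/c)^2 * (1-q) < 1 := by
        have e1 : (2*M/c)^2 * (1-q) = (4*M^2*(1-q))/c^2 := by
          rw [div_pow, div_mul_eq_mul_div]
          congr 1
          ring
        rw [e1, div_lt_one (by positivity)]
        nlinarith
      calc (2*M/c)^2 = ((2*M/c)^2 * (1-q)) * (1-q)⁻¹ := by
            rw [mul_assoc, mul_inv_cancel₀ (ne_of_gt hqlt), mul_one]
        _ < 1 * (1-q)⁻¹ := mul_lt_mul_of_pos_right key (inv_pos.mpr hqlt)
        _ = (1-q)⁻¹ := one_mul _
    obtain ⟨K, hK⟩ := ((hasSum_geometric_of_lt_one hq0 hq1).tendsto_sum_nat.eventually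
      (lt_mem_nhds hB)).exists
    obtain ⟨N, hN⟩ := (hM.eventually (lt_mem_nhds (show (1-δ)*M < M by nlinarith))).exists
    set w : ℕ → ℂ := fun j => ∏ i ∈ Finset.range j, (α (N + i) / lam) with hw
    have hwnorm : ∀ j, ‖w j‖ = ∏ i ∈ Finset.range j, (‖α (N + i)‖ / M) := by
      intro j
      rw [hw, norm_prod]
      exact Finset.prod_congr rfl fun i _ => by rw [norm_div, hlam]
    have hwle : ∀ j, ‖w j‖ ≤ 1 := by
      intro j
      rw [hwnorm]
      exact Finset.prod_le_one (fun i _ => by positivity)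
        (fun i _ => (div_le_one hM0).mpr (hle _))
    have hwge : ∀ j, (1-δ)^j ≤ ‖w j‖ := by
      intro j
      rw [hwnorm]
      calc (1-δ)^j = ∏ _i ∈ Finset.range j, (1-δ) := by
            rw [Finset.prod_const, Finset.card_range]
        _ ≤ ∏ i ∈ Finset.range j, (‖α (N + i)‖ / M) := by
            refine Finset.prod_le_prod (fun _ _ => h1δ) (fun i _ => ?_)
            rw [le_div_iff₀ hM0]
            calc (1-δ) * M ≤ ‖α N‖ := le_of_lt hN
              _ ≤ ‖α (N + i)‖ := mono (Nat.le_add_right N i)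
    set x := ∑ j ∈ Finset.range K, w j • e (N + j) with hx
    have hortho : Orthonormal ℂ (fun j : ℕ => e (N + j)) :=
      e.orthonormal.comp _ (fun a b hab => by omega)
    have hx2 : ‖x‖^2 = ∑ j ∈ Finset.range K, ‖w j‖^2 := by
      have h1 : ⟪x, x⟫_ℂ = ∑ j ∈ Finset.range K, (starRingEnd ℂ) (w j) * w j := by
        rw [hx]
        exact hortho.inner_sum w w (Finset.range K)
      have h2 : (⟪x, x⟫_ℂ).re = ∑ j ∈ Finset.range K, ‖w j‖^2 := by
        rw [h1, Complex.re_sum]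
        refine Finset.sum_congr rfl fun j _ => ?_
        rw [RCLike.conj_mul]
        simp [← Complex.ofReal_pow]
      have h3 : RCLike.re ⟪x, x⟫_ℂ = ‖x‖^2 := inner_self_eq_norm_sq x
      rw [RCLike.re_to_complex] at h3
      rw [← h2]
      exact h3.symm
    have hxlarge : 2*M/c < ‖x‖ := by
      have hsq : (2*M/c)^2 < ‖x‖^2 := by
        rw [hx2]
        refine lt_of_lt_of_le hK (Finset.sum_le_sum fun j _ => ?_)
        have : q^j = ((1-δ)^j)^2 := by rw [hqdef, ← pow_mul, ← pow_mul, Nat.mul_comm]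
        rw [this]
        exact pow_le_pow_left₀ (by positivity) (hwge j) 2
      exact lt_of_pow_lt_pow_left₀ 2 (norm_nonneg x) hsq
    have happ : (lam • (1 : H →L[ℂ] H) - S) x
        = lam • (w 0 • e (N+0)) - lam • (w K • e (N+K)) := by
      rw [hx, map_sum]
      have hterm : ∀ j ∈ Finset.range K, (lam • (1 : H →L[ℂ] H) - S) (w j • e (N+j))
          = lam • (w j • e (N+j)) - lam • (w (j+1) • e (N+(j+1))) := by
        intro j _
        rw [ContinuousLinearMap.sub_apply, ContinuousLinearMap.smul_apply,
          ContinuousLinearMap.one_apply, map_smul, hS (N+j)]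
        have hidx : N + (j + 1) = N + j + 1 := rfl
        rw [hidx]
        congr 1
        rw [smul_smul, smul_smul]
        congr 1
        rw [hw]
        simp only [Finset.prod_range_succ]
        field_simp
      rw [Finset.sum_congr rfl hterm]
      exact Finset.sum_range_sub' (fun j => lam • (w j • e (N + j))) K
    have hsmall : ‖(lam • (1 : H →L[ℂ] H) - S) x‖ ≤ 2*M := by
      rw [happ]
      have hb1 : ∀ j, ‖lam • (w j • e (N+j))‖ ≤ M := by
        intro j
        rw [norm_smul, norm_smul, hortho.1 j, hlam]
        have := hwle j
        nlinarith [norm_nonneg (w j)]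
      calc ‖lam • (w 0 • e (N+0)) - lam • (w K • e (N+K))‖
          ≤ ‖lam • (w 0 • e (N+0))‖ + ‖lam • (w K • e (N+K))‖ := norm_sub_le _ _
        _ ≤ M + M := add_le_add (hb1 0) (hb1 K)
        _ = 2*M := by ring
    have hfinal := hbd x
    have h2M : 2*M < c * ‖x‖ := by
      have := (div_lt_iff₀ hc).mp hxlarge
      linarith
    linarith
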